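/- Fix integers n ≥ 1 and m ≥ 1. Let L be an n×n matrix with entries in ℂ((ħ^{-1}))[[x_1,…,x_m]] with L|_{x=0} = Id_n. Then L is invertible over ℂ((ħ^{-1}))[[x]], and if L = L_+ L_− is its Birkhoff factorization (L_+ over ℂ[ħ][[x]] with L_+|_{x=0} = Id, L_− ∈ Id + ħ^{-1}M_n(ℂ[[ħ^{-1}]][[x]])), then for every v ∈ ℂ^n, the series Σ_{k≥0} (Id − π_+ ∘ L^{-1})^k v converges in the (x_1,…,x_m)-adic topology of (ℂ[ħ][[x]])^n and its sum equals L_+ v; here π_+ : (ℂ((ħ^{-1}))[[x]])^n → (ℂ[ħ][[x]])^n is the projection that discards all strictly negative powers of ħ, and L^{-1} acts by matrix multiplication. -/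

import Mathlib

noncomputable section

/-- `ℂ((ħ⁻¹))`, realized as formal Laurent series (Hahn series over `ℤ`) in the
variable `X = ħ⁻¹`; the coefficient of `ħ^k` is the coefficient at `z = -k`. -/
abbrev LH : Type := LaurentSeries ℂ

/-- The element `ħ = X⁻¹`: the Hahn series with single coefficient `1` in degree `-1`. -/
def hbar : LH := HahnSeries.single (-1 : ℤ) 1

/-- `f` lies in the subring `ℂ[ħ]` (no positive powers of the variable `X = ħ⁻¹`). -/
def InPolyH (f : LH) : Prop := ∀ z : ℤ, 0 < z → f.coeff z = 0

/-- `f` lies in the subring `ℂ[[ħ⁻¹]]`. -/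
def InPSinv (f : LH) : Prop := ∀ z : ℤ, z < 0 → f.coeff z = 0

/-- `f` lies in `ħ⁻¹ · ℂ[[ħ⁻¹]]` (only strictly negative powers of `ħ`). -/
def InPSinvPos (f : LH) : Prop := ∀ z : ℤ, z ≤ 0 → f.coeff z = 0

/-- `f` is a constant (a complex scalar), i.e. independent of `ħ`. -/
def IsConstL (f : LH) : Prop := ∀ z : ℤ, z ≠ 0 → f.coeff z = 0

section ops

variable {σ R : Type} [CommRing R] {n : ℕ}

/-- Formal partial derivative `∂/∂x` on multivariate formal power series. -/
def pd (x : σ) (f : MvPowerSeries σ R) : MvPowerSeries σ R :=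
  fun d => ((d x + 1 : ℕ) : R) * MvPowerSeries.coeff (R := R) (d + Finsupp.single x 1) f

/-- Euler derivative `x·∂/∂x` on multivariate formal power series. -/
def eulerD (x : σ) (f : MvPowerSeries σ R) : MvPowerSeries σ R :=
  fun d => ((d x : ℕ) : R) * MvPowerSeries.coeff (R := R) d f

/-- Entrywise partial derivative of a matrix of power series. -/
def mpd (x : σ) (M : Matrix (Fin n) (Fin n) (MvPowerSeries σ R)) :
    Matrix (Fin n) (Fin n) (MvPowerSeries σ R) := M.map (pd x)

/-- Entrywise Euler derivative of a matrix of power series. -/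
def meu (x : σ) (M : Matrix (Fin n) (Fin n) (MvPowerSeries σ R)) :
    Matrix (Fin n) (Fin n) (MvPowerSeries σ R) := M.map (eulerD x)

/-- A constant matrix, viewed as a matrix of power series. -/
def mC (M : Matrix (Fin n) (Fin n) R) : Matrix (Fin n) (Fin n) (MvPowerSeries σ R) :=
  M.map (MvPowerSeries.C (σ := σ) (R := R))

/-- Constant term (restriction to `Q = t = 0`) of a matrix of power series. -/
def m0 (M : Matrix (Fin n) (Fin n) (MvPowerSeries σ R)) : Matrix (Fin n) (Fin n) R :=
  M.map (MvPowerSeries.constantCoeff (σ := σ) (R := R))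

end ops

section lops

variable {σ : Type} {n : ℕ}

/-- The scalar `ħ` inside `ℂ((ħ⁻¹))[[Q,t]]`. -/
def hbarC (σ : Type) : MvPowerSeries σ LH := MvPowerSeries.C (σ := σ) (R := LH) hbar

/-- The entries of the matrix `M` lie in `ℂ[ħ][[Q,t]]`. -/
def MatPolyH (M : Matrix (Fin n) (Fin n) (MvPowerSeries σ LH)) : Prop :=
  ∀ (i j : Fin n) (d : σ →₀ ℕ), InPolyH (MvPowerSeries.coeff (R := LH) d (M i j))

/-- The entries of the matrix `M` lie in `ℂ[[Q,t]]`, i.e. are independent of `ħ`. -/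
def MatNoH (M : Matrix (Fin n) (Fin n) (MvPowerSeries σ LH)) : Prop :=
  ∀ (i j : Fin n) (d : σ →₀ ℕ), IsConstL (MvPowerSeries.coeff (R := LH) d (M i j))

/-- The first-order operator `v ↦ ħ·(x ∂/∂x)v + A·v` on column vectors. -/
def nablaE (x : σ) (A : Matrix (Fin n) (Fin n) (MvPowerSeries σ LH))
    (v : Fin n → MvPowerSeries σ LH) : Fin n → MvPowerSeries σ LH :=
  fun i => hbarC σ * eulerD x (v i) + A.mulVec v i

/-- The first-order operator `v ↦ ħ·(∂/∂x)v + A·v` on column vectors. -/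
def nablaP (x : σ) (A : Matrix (Fin n) (Fin n) (MvPowerSeries σ LH))
    (v : Fin n → MvPowerSeries σ LH) : Fin n → MvPowerSeries σ LH :=
  fun i => hbarC σ * pd x (v i) + A.mulVec v i

end lops

/-- The projection `π₊ : ℂ((ħ⁻¹)) → ℂ[ħ]` discarding all strictly negative powers of
`ħ` (i.e. keeping the coefficients in degrees `z ≤ 0` of the variable `X = ħ⁻¹`). -/
def truncPlus (f : LH) : LH where
  coeff z := if z ≤ 0 then f.coeff z else 0
  isPWO_support' := f.isPWO_support'.mono (by
    intro z hz
    simp only [Function.mem_support] at hz ⊢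
    intro h
    apply hz
    by_cases hle : z ≤ 0 <;> simp [hle, h])

/-- `π₊` applied coefficientwise on power series: the projection
`ℂ((ħ⁻¹))[[x]] → ℂ[ħ][[x]]`. -/
def piPlus {σ : Type} (f : MvPowerSeries σ LH) : MvPowerSeries σ LH :=
  fun d => truncPlus (MvPowerSeries.coeff (R := LH) d f)

/-! ### Auxiliary lemmas for the proof of `statement3` -/

section AuxProof

open MvPowerSeries

lemma truncPlus_coeff (f : LH) (z : ℤ) :
    (truncPlus f).coeff z = if z ≤ 0 then f.coeff z else 0 := rfl

lemma truncPlus_zero : truncPlus 0 = 0 := by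
  ext z; simp [truncPlus_coeff]

lemma truncPlus_sub (f g : LH) : truncPlus (f - g) = truncPlus f - truncPlus g := by
  ext z
  simp only [truncPlus_coeff, HahnSeries.coeff_sub]
  split <;> simp

lemma truncPlus_eq_self {f : LH} (hf : InPolyH f) : truncPlus f = f := by
  ext z
  rw [truncPlus_coeff]
  split_ifs with h
  · rfl
  · exact (hf z (by omega)).symm

lemma truncPlus_eq_zero {f : LH} (hf : InPSinvPos f) : truncPlus f = 0 := by
  ext z
  rw [truncPlus_coeff, HahnSeries.coeff_zero]
  split_ifs with h
  · exact hf z h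
  · rfl

lemma coeff_piPlus {σ : Type} (f : MvPowerSeries σ LH) (d : σ →₀ ℕ) :
    MvPowerSeries.coeff (R := LH) d (piPlus f) = truncPlus (MvPowerSeries.coeff (R := LH) d f) := rfl

lemma piPlus_sub {σ : Type} (f g : MvPowerSeries σ LH) :
    piPlus (f - g) = piPlus f - piPlus g := by
  apply MvPowerSeries.ext; intro d
  rw [map_sub, coeff_piPlus, map_sub, coeff_piPlus, coeff_piPlus, truncPlus_sub]

lemma piPlus_eq_self {σ : Type} {f : MvPowerSeries σ LH}
    (hf : ∀ d, InPolyH (MvPowerSeries.coeff (R := LH) d f)) : piPlus f = f := by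
  apply MvPowerSeries.ext; intro d
  rw [coeff_piPlus, truncPlus_eq_self (hf d)]

/-- total degree of an exponent -/
def degS {m : ℕ} (d : Fin m →₀ ℕ) : ℕ := d.sum fun _ k => k

lemma degS_antidiag {m : ℕ} {d a b : Fin m →₀ ℕ} (h : a + b = d) :
    degS a + degS b = degS d := by
  subst h
  exact (Finsupp.sum_add_index' (fun _ => rfl) (fun _ _ _ => rfl)).symm

lemma degS_pos {m : ℕ} {a : Fin m →₀ ℕ} (h : a ≠ 0) : 1 ≤ degS a := by
  by_contra hc
  push_neg at hc
  have h0 : degS a = 0 := by omega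
  apply h
  ext x
  by_cases hx : x ∈ a.support
  · exact Finset.sum_eq_zero_iff.mp h0 x hx
  · simpa using Finsupp.notMem_support_iff.mp hx

/-- membership in `ℂ[[ħ⁻¹]]` as image of power series -/
def iotaH : PowerSeries ℂ →+* LH := HahnSeries.ofPowerSeries ℤ ℂ

lemma iotaH_coeff_neg (p : PowerSeries ℂ) {z : ℤ} (hz : z < 0) : (iotaH p).coeff z = 0 := by
  rw [iotaH, HahnSeries.ofPowerSeries_apply]
  apply HahnSeries.embDomain_of_notMem_range
  rintro ⟨k, hk⟩
  have hk' : (k : ℤ) = z := hk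
  omega

lemma iotaH_coeff_nat (p : PowerSeries ℂ) (k : ℕ) :
    (iotaH p).coeff (k : ℤ) = PowerSeries.coeff (R := ℂ) k p :=
  HahnSeries.ofPowerSeries_apply_coeff p k

lemma iotaH_coeff_zero (p : PowerSeries ℂ) :
    (iotaH p).coeff (0 : ℤ) = PowerSeries.constantCoeff (R := ℂ) p := by
  have := iotaH_coeff_nat p 0
  simpa [PowerSeries.coeff_zero_eq_constantCoeff] using this

/-- truncation of a Laurent series to a power series in `ħ⁻¹` -/
def toPS (f : LH) : PowerSeries ℂ := PowerSeries.mk fun k => f.coeff k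

lemma iotaH_toPS {f : LH} (hf : InPSinv f) : iotaH (toPS f) = f := by
  ext z
  rcases lt_or_ge z 0 with h | h
  · rw [iotaH_coeff_neg _ h, hf z h]
  · obtain ⟨k, rfl⟩ := Int.eq_ofNat_of_zero_le h
    rw [iotaH_coeff_nat, toPS, PowerSeries.coeff_mk]

lemma InPSinvPos_iotaH {p : PowerSeries ℂ} (hp : PowerSeries.constantCoeff (R := ℂ) p = 0) :
    InPSinvPos (iotaH p) := by
  intro z hz
  rcases hz.lt_or_eq with h | h
  · exact iotaH_coeff_neg _ h
  · rw [h, iotaH_coeff_zero, hp]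

lemma InPSinvPos_mul_C {f : LH} (hf : InPSinvPos f) (c : ℂ) :
    InPSinvPos (f * HahnSeries.C c) := by
  intro z hz
  rw [HahnSeries.C_apply, HahnSeries.coeff_mul_single_zero, hf z hz, zero_mul]

lemma InPolyH_mul_C {f : LH} (hf : InPolyH f) (c : ℂ) :
    InPolyH (f * HahnSeries.C c) := by
  intro z hz
  rw [HahnSeries.C_apply, HahnSeries.coeff_mul_single_zero, hf z hz, zero_mul]


lemma truncPlus_add (f g : LH) : truncPlus (f + g) = truncPlus f + truncPlus g := by
  ext z
  simp only [truncPlus_coeff, HahnSeries.coeff_add]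
  split <;> simp

lemma piPlus_add {σ : Type} (f g : MvPowerSeries σ LH) :
    piPlus (f + g) = piPlus f + piPlus g := by
  apply MvPowerSeries.ext; intro d
  rw [map_add, coeff_piPlus, map_add, coeff_piPlus, coeff_piPlus, truncPlus_add]

lemma piPlus_zero {σ : Type} : piPlus (0 : MvPowerSeries σ LH) = 0 := by
  apply MvPowerSeries.ext; intro d
  simp [coeff_piPlus, truncPlus_zero]

lemma hahn_coeff_sum {α : Type} (s : Finset α) (f : α → LH) (z : ℤ) :
    (∑ a ∈ s, f a).coeff z = ∑ a ∈ s, (f a).coeff z :=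
  map_sum (HahnSeries.coeff.addMonoidHom z) f s

lemma InPolyH_sum {α : Type} (s : Finset α) (f : α → LH) (h : ∀ a ∈ s, InPolyH (f a)) :
    InPolyH (∑ a ∈ s, f a) := by
  intro z hz
  rw [hahn_coeff_sum]
  exact Finset.sum_eq_zero fun a ha => h a ha z hz

lemma InPSinvPos_sum {α : Type} (s : Finset α) (f : α → LH) (h : ∀ a ∈ s, InPSinvPos (f a)) :
    InPSinvPos (∑ a ∈ s, f a) := by
  intro z hz
  rw [hahn_coeff_sum]
  exact Finset.sum_eq_zero fun a ha => h a ha z hz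

lemma InPSinvPos_zero : InPSinvPos (0 : LH) := by intro z _; simp

section MatVec

variable {n m : ℕ}

/-- entries of a vector lie in `ℂ[ħ][[x]]` -/
def VecPolyH (w : Fin n → MvPowerSeries (Fin m) LH) : Prop :=
  ∀ i d, InPolyH (MvPowerSeries.coeff (R := LH) d (w i))

lemma coeff_mulVec (A : Matrix (Fin n) (Fin n) (MvPowerSeries (Fin m) LH))
    (w : Fin n → MvPowerSeries (Fin m) LH) (i : Fin n) (d : Fin m →₀ ℕ) :
    MvPowerSeries.coeff (R := LH) d (A.mulVec w i) =
      ∑ j, ∑ p ∈ Finset.HasAntidiagonal.antidiagonal d,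
        MvPowerSeries.coeff (R := LH) p.1 (A i j) * MvPowerSeries.coeff (R := LH) p.2 (w j) := by
  simp [Matrix.mulVec, dotProduct, MvPowerSeries.coeff_mul]

lemma coeff_mulVec_eq_zero {A : Matrix (Fin n) (Fin n) (MvPowerSeries (Fin m) LH)}
    (hA : ∀ i j, MvPowerSeries.coeff (R := LH) 0 (A i j) = 0)
    {w : Fin n → MvPowerSeries (Fin m) LH} {N : ℕ}
    (hw : ∀ i d, degS d < N → MvPowerSeries.coeff (R := LH) d (w i) = 0)
    {d : Fin m →₀ ℕ} (hd : degS d < N + 1) (i : Fin n) :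
    MvPowerSeries.coeff (R := LH) d (A.mulVec w i) = 0 := by
  rw [coeff_mulVec]
  apply Finset.sum_eq_zero; intro j _
  apply Finset.sum_eq_zero; intro p hp
  rw [Finset.HasAntidiagonal.mem_antidiagonal] at hp
  by_cases h1 : p.1 = 0
  · rw [h1, hA, zero_mul]
  · have hsum := degS_antidiag hp
    have hp1 := degS_pos h1
    rw [hw j p.2 (by omega), mul_zero]

lemma vanish_of_truncPlus {A : Matrix (Fin n) (Fin n) (MvPowerSeries (Fin m) LH)}
    (hA : ∀ i j, MvPowerSeries.coeff (R := LH) 0 (A i j) = 0)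
    {u : Fin n → MvPowerSeries (Fin m) LH} (hu : VecPolyH u) {N : ℕ}
    (h : ∀ i d, degS d < N →
      truncPlus (MvPowerSeries.coeff (R := LH) d (u i) - MvPowerSeries.coeff (R := LH) d (A.mulVec u i)) = 0) :
    ∀ d, degS d < N → ∀ i, MvPowerSeries.coeff (R := LH) d (u i) = 0 := by
  have key : ∀ k, ∀ d : Fin m →₀ ℕ, degS d = k → degS d < N → ∀ i,
      MvPowerSeries.coeff (R := LH) d (u i) = 0 := by
    intro k
    induction k using Nat.strong_induction_on with
    | _ k IH =>
      intro d hdk hdN i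
      have hAu : MvPowerSeries.coeff (R := LH) d (A.mulVec u i) = 0 := by
        rw [coeff_mulVec]
        apply Finset.sum_eq_zero; intro j _
        apply Finset.sum_eq_zero; intro p hp
        rw [Finset.HasAntidiagonal.mem_antidiagonal] at hp
        by_cases h1 : p.1 = 0
        · rw [h1, hA, zero_mul]
        · have hsum := degS_antidiag hp
          have hp1 := degS_pos h1
          rw [IH (degS p.2) (by omega) p.2 rfl (by omega) j, mul_zero]
      have h2 := h i d hdN
      rw [hAu, sub_zero, truncPlus_eq_self (hu i d)] at h2
      exact h2
  intro d hd i; exact key (degS d) d rfl hd i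

end MatVec

end AuxProof

/-- invertibility of `L` and the Neumann-series formula
`L₊ v = Σ_k (Id − π₊ ∘ L⁻¹)^k v` for the positive Birkhoff factor,
convergence being in the `(x)`-adic topology. -/
theorem statement3 (n m : ℕ) (hn : 1 ≤ n) (hm : 1 ≤ m)
    (L Lp Lm : Matrix (Fin n) (Fin n) (MvPowerSeries (Fin m) LH))
    (hL0 : m0 L = 1)
    -- `L = L₊ L₋` is the Birkhoff factorization
    (hLp : ∀ (i j : Fin n) (d : Fin m →₀ ℕ), InPolyH (MvPowerSeries.coeff (R := LH) d (Lp i j)))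
    (hLp0 : m0 Lp = 1)
    (hLm : ∀ (i j : Fin n) (d : Fin m →₀ ℕ), InPSinv (MvPowerSeries.coeff (R := LH) d (Lm i j)))
    (hLm1 : ∀ (i j : Fin n) (d : Fin m →₀ ℕ),
      InPSinvPos (MvPowerSeries.coeff (R := LH) d ((Lm - 1) i j)))
    (hfac : L = Lp * Lm) :
    -- `L` is invertible over `ℂ((ħ⁻¹))[[x]]`
    IsUnit L ∧
    -- the partial sums of `Σ_k (Id − π₊ ∘ L⁻¹)^k v` converge `(x)`-adically to `L₊ v`
    ∀ v : Fin n → ℂ, ∀ (d : Fin m →₀ ℕ) (i : Fin n), ∃ N₀ : ℕ, ∀ N ≥ N₀,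
      MvPowerSeries.coeff (R := LH) d
        ((∑ k ∈ Finset.range N,
          (fun w : Fin n → MvPowerSeries (Fin m) LH =>
              w - fun i' => piPlus ((L⁻¹.mulVec w) i'))^[k]
            (fun j => MvPowerSeries.C (σ := Fin m) (R := LH) (HahnSeries.C (v j)))) i)
      = MvPowerSeries.coeff (R := LH) d
          ((Lp.mulVec (fun j => MvPowerSeries.C (σ := Fin m) (R := LH) (HahnSeries.C (v j)))) i) := by
  classical
  -- invertibility of L, Lp, Lm
  have hdet : ∀ (M : Matrix (Fin n) (Fin n) (MvPowerSeries (Fin m) LH)), m0 M = 1 → IsUnit M.det := by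
    intro M hM
    rw [MvPowerSeries.isUnit_iff_constantCoeff]
    have h1 : MvPowerSeries.constantCoeff (σ := Fin m) (R := LH) M.det = (m0 M).det := by
      rw [RingHom.map_det]; rfl
    rw [h1, hM, Matrix.det_one]
    exact isUnit_one
  have hdetL : IsUnit L.det := hdet L hL0
  have hdetLp : IsUnit Lp.det := hdet Lp hLp0
  have hdetLm : IsUnit Lm.det := by
    have hmul : L.det = Lp.det * Lm.det := by rw [hfac, Matrix.det_mul]
    exact isUnit_of_mul_isUnit_right (hmul ▸ hdetL)
  refine ⟨(Matrix.isUnit_iff_isUnit_det L).mpr hdetL, ?_⟩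
  -- the morphism φ : M_n(ℂ[[X]][[x]]) → M_n(LH[[x]])
  set φ : MvPowerSeries (Fin m) (PowerSeries ℂ) →+* MvPowerSeries (Fin m) LH :=
    MvPowerSeries.map (σ := Fin m) iotaH with hφ
  set Φ : Matrix (Fin n) (Fin n) (MvPowerSeries (Fin m) (PowerSeries ℂ)) →+*
      Matrix (Fin n) (Fin n) (MvPowerSeries (Fin m) LH) := φ.mapMatrix with hΦ
  -- the preimage Lm' of Lm over ℂ[[X]]
  set Lm' : Matrix (Fin n) (Fin n) (MvPowerSeries (Fin m) (PowerSeries ℂ)) :=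
    fun i j => fun e => toPS (MvPowerSeries.coeff (R := LH) e (Lm i j)) with hLm'
  have hcoeffLm' : ∀ (i j : Fin n) (e : Fin m →₀ ℕ),
      MvPowerSeries.coeff (R := PowerSeries ℂ) e (Lm' i j) = toPS (MvPowerSeries.coeff (R := LH) e (Lm i j)) :=
    fun _ _ _ => rfl
  have hΦLm' : Φ Lm' = Lm := by
    apply Matrix.ext
    intro i j
    show φ (Lm' i j) = Lm i j
    apply MvPowerSeries.ext; intro e
    rw [hφ, MvPowerSeries.coeff_map, hcoeffLm', iotaH_toPS (hLm i j e)]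
  -- entries of Lm' - 1 have zero constant coefficient in ħ⁻¹
  have hA'0 : ∀ (i j : Fin n) (e : Fin m →₀ ℕ),
      PowerSeries.constantCoeff (R := ℂ) (MvPowerSeries.coeff (R := PowerSeries ℂ) e ((Lm' - 1) i j)) = 0 := by
    intro i j e
    have h1 := hLm1 i j e 0 le_rfl
    rw [Matrix.sub_apply, map_sub] at h1 ⊢
    rw [map_sub]
    have h2 : PowerSeries.constantCoeff (R := ℂ)
        (MvPowerSeries.coeff (R := PowerSeries ℂ) e (Lm' i j)) =
        (MvPowerSeries.coeff (R := LH) e (Lm i j)).coeff 0 := by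
      rw [hcoeffLm']; rfl
    rw [HahnSeries.coeff_sub] at h1
    rw [h2]
    have h3 : PowerSeries.constantCoeff (R := ℂ)
        (MvPowerSeries.coeff (R := PowerSeries ℂ) e ((1 : Matrix (Fin n) (Fin n)
          (MvPowerSeries (Fin m) (PowerSeries ℂ))) i j)) =
        (MvPowerSeries.coeff (R := LH) e ((1 : Matrix (Fin n) (Fin n)
          (MvPowerSeries (Fin m) LH)) i j)).coeff 0 := by
      by_cases hij : i = j
      · subst hij
        rw [Matrix.one_apply_eq, Matrix.one_apply_eq, MvPowerSeries.coeff_one,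
          MvPowerSeries.coeff_one]
        split_ifs with he
        · simp
        · simp
      · rw [Matrix.one_apply_ne hij, Matrix.one_apply_ne hij]
        simp
    rw [h3]
    exact h1
  -- Lm' is invertible
  have hUnitLm' : IsUnit Lm' := by
    rw [Matrix.isUnit_iff_isUnit_det, MvPowerSeries.isUnit_iff_constantCoeff]
    have h1 : MvPowerSeries.constantCoeff (σ := Fin m) (R := PowerSeries ℂ) Lm'.det =
        (Lm'.map (MvPowerSeries.constantCoeff (σ := Fin m) (R := PowerSeries ℂ))).det := by
      rw [RingHom.map_det]; rfl
    rw [PowerSeries.isUnit_iff_constantCoeff, h1, RingHom.map_det]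
    have h2 : (PowerSeries.constantCoeff (R := ℂ)).mapMatrix
        (Lm'.map (MvPowerSeries.constantCoeff (σ := Fin m) (R := PowerSeries ℂ))) = 1 := by
      ext i j
      have h4 := hA'0 i j 0
      rw [Matrix.sub_apply, map_sub, map_sub, sub_eq_zero] at h4
      simp only [RingHom.mapMatrix_apply, Matrix.map_apply]
      rw [← MvPowerSeries.coeff_zero_eq_constantCoeff_apply, h4]
      by_cases hij : i = j
      · subst hij
        rw [Matrix.one_apply_eq, Matrix.one_apply_eq, MvPowerSeries.coeff_one]
        simp
      · rw [Matrix.one_apply_ne hij, Matrix.one_apply_ne hij]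
        simp
    rw [h2, Matrix.det_one]
    exact isUnit_one
  obtain ⟨uK, huK⟩ := hUnitLm'
  set K : Matrix (Fin n) (Fin n) (MvPowerSeries (Fin m) (PowerSeries ℂ)) := ↑uK⁻¹ with hKdef
  have hK1 : Lm' * K = 1 := by rw [← huK, hKdef, Units.mul_inv]
  -- entries of K - 1 have zero constant coefficient in ħ⁻¹
  have hB0 : ∀ (i j : Fin n) (e : Fin m →₀ ℕ),
      PowerSeries.constantCoeff (R := ℂ) (MvPowerSeries.coeff (R := PowerSeries ℂ) e ((K - 1) i j)) = 0 := by
    have hKB : K - 1 = -((Lm' - 1) * K) := by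
      rw [sub_mul, one_mul, hK1, neg_sub]
    intro i j e
    rw [hKB, Matrix.neg_apply, map_neg, map_neg, neg_eq_zero, Matrix.mul_apply]
    rw [map_sum, map_sum]
    apply Finset.sum_eq_zero; intro l _
    rw [MvPowerSeries.coeff_mul, map_sum]
    apply Finset.sum_eq_zero; intro p _
    rw [map_mul, hA'0 i l p.1, zero_mul]
  -- L⁻¹ * Lp = Φ K
  have hLinvLp : L⁻¹ * Lp = Φ K := by
    have hLmK : Lm * Φ K = 1 := by rw [← hΦLm', ← map_mul, hK1, map_one]
    have hLmInv : Lm⁻¹ = Φ K := Matrix.inv_eq_right_inv hLmK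
    rw [hfac, Matrix.mul_inv_rev, Matrix.mul_assoc, Matrix.nonsing_inv_mul Lp hdetLp,
      Matrix.mul_one, hLmInv]
  -- constant coefficient of L⁻¹
  have hm0inv : m0 L⁻¹ = 1 := by
    have h := congrArg (fun M : Matrix (Fin n) (Fin n) (MvPowerSeries (Fin m) LH) =>
      M.map (MvPowerSeries.constantCoeff (σ := Fin m) (R := LH))) (Matrix.nonsing_inv_mul L hdetL)
    simp only [Matrix.map_mul] at h
    have hone : (1 : Matrix (Fin n) (Fin n) (MvPowerSeries (Fin m) LH)).map
        (MvPowerSeries.constantCoeff (σ := Fin m) (R := LH)) = 1 :=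
      Matrix.map_one _ (map_zero _) (map_one _)
    rw [hone] at h
    have hL0' : L.map (MvPowerSeries.constantCoeff (σ := Fin m) (R := LH)) = 1 := hL0
    rw [hL0', mul_one] at h
    exact h
  have hMker0 : ∀ i j : Fin n, MvPowerSeries.coeff (R := LH) 0 ((1 - L⁻¹) i j) = 0 := by
    intro i j
    have h1 : MvPowerSeries.constantCoeff (σ := Fin m) (R := LH) (L⁻¹ i j) =
        (1 : Matrix (Fin n) (Fin n) LH) i j := by
      rw [← hm0inv]; rfl
    rw [Matrix.sub_apply, map_sub, MvPowerSeries.coeff_zero_eq_constantCoeff_apply,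
      MvPowerSeries.coeff_zero_eq_constantCoeff_apply, h1]
    by_cases hij : i = j <;> simp [Matrix.one_apply, hij]
  -- now the main computation
  intro v d i
  set w₀ : Fin n → MvPowerSeries (Fin m) LH :=
    fun j => MvPowerSeries.C (σ := Fin m) (R := LH) (HahnSeries.C (v j)) with hw₀def
  set F : (Fin n → MvPowerSeries (Fin m) LH) → (Fin n → MvPowerSeries (Fin m) LH) :=
    fun w => w - fun i' => piPlus ((L⁻¹.mulVec w) i') with hFdef
  have hw₀poly : VecPolyH w₀ := by
    intro i' d'
    rw [hw₀def, MvPowerSeries.coeff_C]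
    split_ifs with hd'
    · intro z hz
      rw [HahnSeries.C_apply, HahnSeries.coeff_single_of_ne (by omega)]
    · intro z hz; simp
  have hFapp : ∀ w (i' : Fin n), F w i' = w i' - piPlus ((L⁻¹.mulVec w) i') := by
    intro w i'; rw [hFdef]; rfl
  have hFform : ∀ w, VecPolyH w → ∀ i' : Fin n,
      F w i' = piPlus (((1 - L⁻¹).mulVec w) i') := by
    intro w hw i'
    have h1 : (1 - L⁻¹).mulVec w i' = w i' - L⁻¹.mulVec w i' := by
      rw [Matrix.sub_mulVec]
      simp [Matrix.one_mulVec]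
    rw [hFapp, h1, piPlus_sub, piPlus_eq_self (hw i')]
  have hFpoly : ∀ w, VecPolyH w → VecPolyH (F w) := by
    intro w hw i' d'
    rw [hFform w hw i', coeff_piPlus]
    intro z hz
    rw [truncPlus_coeff, if_neg (by omega)]
  have hFord : ∀ w (N' : ℕ), VecPolyH w →
      (∀ (i' : Fin n) (d' : Fin m →₀ ℕ), degS d' < N' → MvPowerSeries.coeff (R := LH) d' (w i') = 0) →
      ∀ (i' : Fin n) (d' : Fin m →₀ ℕ), degS d' < N' + 1 →
        MvPowerSeries.coeff (R := LH) d' (F w i') = 0 := by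
    intro w N' hw hord i' d' hd'
    rw [hFform w hw i', coeff_piPlus, coeff_mulVec_eq_zero hMker0 hord hd' i', truncPlus_zero]
  have hiter : ∀ k : ℕ, VecPolyH (F^[k] w₀) ∧
      (∀ (i' : Fin n) (d' : Fin m →₀ ℕ), degS d' < k →
        MvPowerSeries.coeff (R := LH) d' (F^[k] w₀ i') = 0) := by
    intro k; induction k with
    | zero => exact ⟨hw₀poly, fun i' d' h => absurd h (Nat.not_lt_zero _)⟩
    | succ k ih =>
      rw [Function.iterate_succ_apply']
      exact ⟨hFpoly _ ih.1, hFord _ k ih.1 ih.2⟩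
  refine ⟨degS d + 1, fun N hN => ?_⟩
  -- the partial sum and the error term
  set S : Fin n → MvPowerSeries (Fin m) LH := ∑ k ∈ Finset.range N, F^[k] w₀ with hSdef
  have hSapp : ∀ i' : Fin n, S i' = ∑ k ∈ Finset.range N, F^[k] w₀ i' := by
    intro i'; rw [hSdef]; simp
  have hw₀coeff : ∀ (j : Fin n) (d' : Fin m →₀ ℕ),
      MvPowerSeries.coeff (R := LH) d' (w₀ j) = if d' = 0 then HahnSeries.C (v j) else 0 := by
    intro j d'
    simp only [hw₀def]
    exact MvPowerSeries.coeff_C d' _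
  have hSpoly : VecPolyH S := by
    intro i' d'
    rw [hSapp, map_sum]
    exact InPolyH_sum _ _ fun k _ => (hiter k).1 i' d'
  have hLpw : VecPolyH (Lp.mulVec w₀) := by
    intro i' d'
    rw [coeff_mulVec]
    apply InPolyH_sum; intro j _
    apply InPolyH_sum; intro p _
    rw [hw₀coeff]
    by_cases h2 : p.2 = 0
    · rw [if_pos h2]
      exact InPolyH_mul_C (hLp i' j p.1) _
    · rw [if_neg h2, mul_zero]
      intro z hz; simp
  -- F is additive
  have hFadd : ∀ w w', F (w + w') = F w + F w' := by
    intro w w'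
    funext i'
    rw [Pi.add_apply, hFapp, hFapp, hFapp, Matrix.mulVec_add]
    simp only [Pi.add_apply]
    rw [piPlus_add]
    ring
  have hF0 : F 0 = 0 := by
    funext i'
    rw [hFapp, Matrix.mulVec_zero]
    simp [piPlus_zero]
  -- telescoping identity for the partial sums
  have hFS : F S = S + F^[N] w₀ - w₀ := by
    have h1 : F S = ∑ k ∈ Finset.range N, F (F^[k] w₀) := by
      rw [hSdef]
      exact map_sum (AddMonoidHom.mk' F hFadd) _ _
    have h2 : ∀ k : ℕ, F (F^[k] w₀) = F^[k+1] w₀ := by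
      intro k; rw [Function.iterate_succ_apply']
    rw [h1]
    simp only [h2]
    have h3 : ∑ k ∈ Finset.range (N + 1), F^[k] w₀ =
        (∑ k ∈ Finset.range N, F^[k+1] w₀) + F^[0] w₀ := Finset.sum_range_succ' _ _
    have h4 : ∑ k ∈ Finset.range (N + 1), F^[k] w₀ =
        (∑ k ∈ Finset.range N, F^[k] w₀) + F^[N] w₀ := Finset.sum_range_succ _ _
    rw [Function.iterate_zero_apply] at h3
    rw [← hSdef] at h4
    have h5 : (∑ k ∈ Finset.range N, F^[k+1] w₀) = S + F^[N] w₀ - w₀ := by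
      have h6 := h3.symm.trans h4
      exact eq_sub_of_add_eq h6
    exact h5
  have hkey : ∀ i' : Fin n, piPlus ((L⁻¹.mulVec S) i') = w₀ i' - F^[N] w₀ i' := by
    intro i'
    have h1 : piPlus ((L⁻¹.mulVec S) i') = S i' - F S i' := by
      rw [hFapp]; ring
    rw [h1, hFS]
    simp only [Pi.sub_apply, Pi.add_apply]
    ring
  -- the error vector
  set u : Fin n → MvPowerSeries (Fin m) LH := S - Lp.mulVec w₀ with hudef
  have hupoly : VecPolyH u := by
    intro i' d'
    rw [hudef, Pi.sub_apply, map_sub]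
    intro z hz
    rw [HahnSeries.coeff_sub, hSpoly i' d' z hz, hLpw i' d' z hz, sub_zero]
  have hmain : ∀ (i' : Fin n) (d' : Fin m →₀ ℕ), degS d' < N →
      truncPlus (MvPowerSeries.coeff (R := LH) d' (u i')
        - MvPowerSeries.coeff (R := LH) d' ((1 - L⁻¹).mulVec u i')) = 0 := by
    intro i' d' hd'
    have h1 : MvPowerSeries.coeff (R := LH) d' (u i')
        - MvPowerSeries.coeff (R := LH) d' ((1 - L⁻¹).mulVec u i')
        = MvPowerSeries.coeff (R := LH) d' (L⁻¹.mulVec u i') := by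
      rw [Matrix.sub_mulVec]
      simp only [Matrix.one_mulVec, Pi.sub_apply]
      rw [map_sub]
      ring
    rw [h1]
    have h2 : L⁻¹.mulVec u = L⁻¹.mulVec S - (Φ K).mulVec w₀ := by
      rw [hudef, Matrix.mulVec_sub, Matrix.mulVec_mulVec, hLinvLp]
    rw [h2, Pi.sub_apply, map_sub, truncPlus_sub]
    -- first piece
    have h3 : truncPlus (MvPowerSeries.coeff (R := LH) d' (L⁻¹.mulVec S i'))
        = MvPowerSeries.coeff (R := LH) d' (w₀ i') := by
      have := congrArg (MvPowerSeries.coeff (R := LH) d') (hkey i')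
      rw [coeff_piPlus] at this
      rw [this, map_sub, (hiter N).2 i' d' hd', sub_zero]
    -- second piece
    have h4 : (Φ K).mulVec w₀ = w₀ + (Φ (K - 1)).mulVec w₀ := by
      have : Φ K = 1 + Φ (K - 1) := by
        rw [map_sub, map_one]; abel
      rw [this, Matrix.add_mulVec, Matrix.one_mulVec]
    have h5 : InPSinvPos (MvPowerSeries.coeff (R := LH) d' ((Φ (K - 1)).mulVec w₀ i')) := by
      rw [coeff_mulVec]
      apply InPSinvPos_sum; intro j _
      apply InPSinvPos_sum; intro p _
      rw [hw₀coeff]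
      by_cases hp2 : p.2 = 0
      · rw [if_pos hp2]
        apply InPSinvPos_mul_C
        have hΦ1 : Φ (K - 1) i' j = φ ((K - 1) i' j) := rfl
        rw [hΦ1, hφ, MvPowerSeries.coeff_map]
        exact InPSinvPos_iotaH (hB0 i' j p.1)
      · rw [if_neg hp2, mul_zero]
        exact InPSinvPos_zero
    have h6 : truncPlus (MvPowerSeries.coeff (R := LH) d' ((Φ K).mulVec w₀ i'))
        = MvPowerSeries.coeff (R := LH) d' (w₀ i') := by
      rw [h4, Pi.add_apply, map_add, truncPlus_add, truncPlus_eq_self (hw₀poly i' d'),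
        truncPlus_eq_zero h5, add_zero]
    rw [h3, h6, sub_self]
  have hvanish := vanish_of_truncPlus hMker0 hupoly hmain
  have hfin := hvanish d (by omega) i
  rw [hudef, Pi.sub_apply, map_sub, sub_eq_zero] at hfin
  exact hfin
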